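/- arXiv:2506.12578 — 4 statements merged into one kernel-verified Lean document; each statement's English description precedes it below -/
import Mathlib

section
/- Every finite rank continuous operator from a normed lattice E to a normed lattice F is a Levi operator. -/
/-- Order convergence of a net. -/
def OConvNet {ι F : Type*} [Preorder ι] [Lattice F] [AddCommGroup F]
    (x : ι → F) (x₀ : F) : Prop :=
  ∃ D : Set F, D.Nonempty ∧ DirectedOn (· ≥ ·) D ∧ IsGLB D 0 ∧
    ∀ y ∈ D, ∃ α₀, ∀ α, α₀ ≤ α → |x α - x₀| ≤ y

/-- Order convergence of a sequence. -/
def OConvSeq {F : Type*} [Lattice F] [AddCommGroup F] (x : ℕ → F) (x₀ : F) : Prop :=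
  ∃ y : ℕ → F, Antitone y ∧ IsGLB (Set.range y) 0 ∧
    ∀ m, ∃ n₀, ∀ n, n₀ ≤ n → |x n - x₀| ≤ y m

/-- A net is order-Cauchy if its double net of differences order converges to `0`. -/
def OCauchyNet {ι F : Type*} [Preorder ι] [Lattice F] [AddCommGroup F]
    (x : ι → F) : Prop :=
  OConvNet (fun p : ι × ι => x p.1 - x p.2) (0 : F)

/-- A sequence is order-Cauchy if its double sequence of differences order converges to `0`. -/
def OCauchySeq' {F : Type*} [Lattice F] [AddCommGroup F] (x : ℕ → F) : Prop :=
  OConvNet (fun p : ℕ × ℕ => x p.1 - x p.2) (0 : F)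

section Maps
variable {E F : Type*} [Lattice E] [AddCommGroup E] [Norm E] [Lattice F] [AddCommGroup F]

def IsLeviMap (T : E → F) : Prop :=
  ∀ (ι : Type) [Nonempty ι] [Preorder ι] [IsDirected ι (· ≤ ·)],
    ∀ x : ι → E, Monotone x → (∃ C, ∀ α, ‖x α‖ ≤ C) →
      ∃ x₀ : E, OConvNet (fun α => T (x α)) (T x₀)

def IsSigmaLeviMap (T : E → F) : Prop :=
  ∀ x : ℕ → E, Monotone x → (∃ C, ∀ n, ‖x n‖ ≤ C) →
    ∃ x₀ : E, OConvSeq (fun n => T (x n)) (T x₀)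

def IsCqLeviMap (T : E → F) : Prop :=
  ∀ (ι : Type) [Nonempty ι] [Preorder ι] [IsDirected ι (· ≤ ·)],
    ∀ x : ι → E, Monotone x → (∃ C, ∀ α, ‖x α‖ ≤ C) →
      ∃ y₀ : F, OConvNet (fun α => T (x α)) y₀

def IsCqSigmaLeviMap (T : E → F) : Prop :=
  ∀ x : ℕ → E, Monotone x → (∃ C, ∀ n, ‖x n‖ ≤ C) →
    ∃ y₀ : F, OConvSeq (fun n => T (x n)) y₀

def IsQLeviMap (T : E → F) : Prop :=
  ∀ (ι : Type) [Nonempty ι] [Preorder ι] [IsDirected ι (· ≤ ·)],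
    ∀ x : ι → E, Monotone x → (∃ C, ∀ α, ‖x α‖ ≤ C) →
      OCauchyNet (fun α => T (x α))

def IsQSigmaLeviMap (T : E → F) : Prop :=
  ∀ x : ℕ → E, Monotone x → (∃ C, ∀ n, ‖x n‖ ≤ C) →
    OCauchySeq' (fun n => T (x n))

end Maps

section AuxOrderSMul
variable {F : Type*} [NormedAddCommGroup F] [Lattice F] [HasSolidNorm F] [IsOrderedAddMonoid F] [NormedSpace ℝ F]

lemma aux_nonneg_of_neg_le {w : F} (h : -w ≤ w) : 0 ≤ w := by
  have h1 : w⁻ ≤ w⁺ := by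
    rw [negPart_def, posPart_def]
    exact sup_le_sup_right h 0
  have h2 : w⁻ = 0 := by
    calc w⁻ = w⁻ ⊓ w⁺ := (inf_eq_left.mpr h1).symm
    _ = w⁺ ⊓ w⁻ := by rw [inf_comm]
    _ = 0 := posPart_inf_negPart_eq_zero w
  exact negPart_eq_zero.mp h2

lemma aux_half_nonneg {w : F} (h : 0 ≤ w + w) : 0 ≤ w :=
  aux_nonneg_of_neg_le (neg_le_iff_add_nonneg.mpr h)

lemma aux_smul_nonneg {r : ℝ} (hr : 0 ≤ r) {v : F} (hv : 0 ≤ v) : 0 ≤ r • v := by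
  have hpow : ∀ m : ℕ, 0 ≤ ((2:ℝ)^m)⁻¹ • v := by
    intro m
    induction m with
    | zero => simpa using hv
    | succ m ih =>
      apply aux_half_nonneg
      have h : ((2:ℝ)^(m+1))⁻¹ • v + ((2:ℝ)^(m+1))⁻¹ • v = ((2:ℝ)^m)⁻¹ • v := by
        rw [← two_smul ℝ, smul_smul]
        congr 1
        rw [pow_succ]
        field_simp
      rwa [h]
  have hdy : ∀ (k m : ℕ), 0 ≤ ((k:ℝ) * ((2:ℝ)^m)⁻¹) • v := by
    intro k m
    rw [mul_smul, Nat.cast_smul_eq_nsmul]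
    exact nsmul_nonneg (hpow m) k
  set q : ℕ → ℝ := fun m => (⌈r * 2^m⌉₊ : ℝ) * ((2:ℝ)^m)⁻¹ with hqdef
  have hql : ∀ m, r ≤ q m := by
    intro m
    have h2 : (0:ℝ) < (2:ℝ)^m := by positivity
    have h3 := mul_le_mul_of_nonneg_right (Nat.le_ceil (r * 2^m)) (le_of_lt (inv_pos.mpr h2))
    calc r = r * 2^m * ((2:ℝ)^m)⁻¹ := by field_simp
    _ ≤ q m := h3
  have hqu : ∀ m, q m ≤ r + ((2:ℝ)^m)⁻¹ := by
    intro m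
    have h2 : (0:ℝ) < (2:ℝ)^m := by positivity
    have hc : (⌈r * 2^m⌉₊ : ℝ) ≤ r * 2^m + 1 :=
      le_of_lt (Nat.ceil_lt_add_one (by positivity))
    calc q m ≤ (r * 2^m + 1) * ((2:ℝ)^m)⁻¹ :=
          mul_le_mul_of_nonneg_right hc (le_of_lt (inv_pos.mpr h2))
    _ = r + ((2:ℝ)^m)⁻¹ := by field_simp
  have hinv : Filter.Tendsto (fun m : ℕ => ((2:ℝ)^m)⁻¹) Filter.atTop (nhds 0) := by
    have h : (fun m : ℕ => ((2:ℝ)^m)⁻¹) = fun m : ℕ => ((2:ℝ)⁻¹)^m := by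
      funext m; rw [inv_pow]
    rw [h]
    exact tendsto_pow_atTop_nhds_zero_of_lt_one (by norm_num) (by norm_num)
  have hq : Filter.Tendsto q Filter.atTop (nhds r) := by
    have hupper : Filter.Tendsto (fun m : ℕ => r + ((2:ℝ)^m)⁻¹) Filter.atTop (nhds r) := by
      simpa using tendsto_const_nhds.add hinv
    exact tendsto_of_tendsto_of_tendsto_of_le_of_le tendsto_const_nhds hupper hql hqu
  have hqv : Filter.Tendsto (fun m => q m • v) Filter.atTop (nhds (r • v)) :=
    hq.smul_const v
  have hcl : IsClosed {z : F | (0:F) ≤ z} := isClosed_le continuous_const continuous_id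
  exact hcl.mem_of_tendsto hqv (Filter.Eventually.of_forall (fun m => hdy _ m))

lemma aux_smul_le_smul {r s : ℝ} (h : r ≤ s) {v : F} (hv : 0 ≤ v) : r • v ≤ s • v := by
  have h2 := aux_smul_nonneg (sub_nonneg.2 h) hv
  rw [sub_smul] at h2
  exact sub_nonneg.mp h2

lemma aux_abs_smul_le (r : ℝ) (v : F) : |r • v| ≤ |r| • |v| := by
  have h1 : (0:F) ≤ |v| - v := sub_nonneg.2 (le_abs_self v)
  have h2 : (0:F) ≤ |v| + v := by simpa using add_le_add_left (neg_le_abs v) v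
  have hup : (0:F) ≤ |r| • |v| - r • v := by
    rcases le_or_gt 0 r with hr | hr
    · rw [abs_of_nonneg hr, ← smul_sub]
      exact aux_smul_nonneg hr h1
    · rw [abs_of_neg hr]
      have e1 : (-r) • |v| - r • v = (-r) • (|v| + v) := by
        rw [smul_add, neg_smul, neg_smul]; abel
      rw [e1]
      exact aux_smul_nonneg (by linarith) h2
  have hlow : (0:F) ≤ |r| • |v| + r • v := by
    rcases le_or_gt 0 r with hr | hr
    · rw [abs_of_nonneg hr, ← smul_add]
      exact aux_smul_nonneg hr h2
    · rw [abs_of_neg hr]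
      have e2 : (-r) • |v| + r • v = (-r) • (|v| - v) := by
        rw [smul_sub, neg_smul, neg_smul]; abel
      rw [e2]
      exact aux_smul_nonneg (by linarith) h1
  refine abs_le'.mpr ⟨sub_nonneg.mp hup, ?_⟩
  exact neg_le_iff_add_nonneg.mpr hlow

lemma aux_abs_sum_le {κ : Type*} (s : Finset κ) (g : κ → F) :
    |∑ k ∈ s, g k| ≤ ∑ k ∈ s, |g k| := by
  classical
  induction s using Finset.cons_induction with
  | empty => simp
  | cons a s' ha ih =>
    rw [Finset.sum_cons, Finset.sum_cons]
    have habs : ∀ p q : F, |p + q| ≤ |p| + |q| := by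
      intro p q
      refine abs_le'.mpr ⟨add_le_add (le_abs_self p) (le_abs_self q), ?_⟩
      rw [neg_add]
      exact add_le_add (neg_le_abs p) (neg_le_abs q)
    calc |g a + ∑ k ∈ s', g k| ≤ |g a| + |∑ k ∈ s', g k| := habs (g a) (∑ k ∈ s', g k)
    _ ≤ |g a| + ∑ k ∈ s', |g k| := add_le_add le_rfl ih

end AuxOrderSMul

/-- Scalar convergence of a continuous functional along a norm-bounded monotone net. -/
lemma aux_key_conv {E : Type*} [NormedAddCommGroup E] [Lattice E] [HasSolidNorm E] [IsOrderedAddMonoid E] [NormedSpace ℝ E]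
    {ι : Type} [Nonempty ι] [Preorder ι] [IsDirected ι (· ≤ ·)]
    {x : ι → E} (hx : Monotone x) {C : ℝ} (hC : ∀ α, ‖x α‖ ≤ C)
    (g : E →L[ℝ] ℝ) :
    ∃ t : ℝ, ∀ ε : ℝ, 0 < ε → ∃ α₀, ∀ α, α₀ ≤ α → |g (x α) - t| ≤ ε := by
  have C1 : ∀ ε : ℝ, 0 < ε → ∃ α₀, ∀ α, α₀ ≤ α → |g (x α) - g (x α₀)| ≤ ε := by
    intro ε hε
    by_contra hcon
    push_neg at hcon
    choose Fn hle hgap using hcon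
    obtain ⟨a0⟩ := (inferInstance : Nonempty ι)
    set c : ℕ → ι := fun j => Fn^[j] a0 with hcdef
    have hc : ∀ j, c (j+1) = Fn (c j) := fun j => Function.iterate_succ_apply' Fn j a0
    have hcm : Monotone c := monotone_nat_of_le_succ (fun j => by rw [hc]; exact hle _)
    set u : ℕ → E := fun j => x (c (j+1)) - x (c j) with hudef
    have hu : ∀ j, (0:E) ≤ u j := fun j => sub_nonneg.2 (hx (hcm (Nat.le_succ j)))
    have hgu : ∀ j, ε < |g (u j)| := by
      intro j
      have := hgap (c j)
      rw [← hc j] at this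
      simpa [hudef, map_sub] using this
    set v : ℕ → E := fun j => if 0 ≤ g (u j) then u j else -u j with hvdef
    have hgv : ∀ j, ε < g (v j) := by
      intro j
      by_cases h : 0 ≤ g (u j)
      · simpa [hvdef, h, abs_of_nonneg h] using hgu j
      · push_neg at h
        have := hgu j
        rw [abs_of_neg h] at this
        simpa [hvdef, not_le.mpr h, map_neg] using this
    have hvabs : ∀ j, |v j| = u j := by
      intro j
      by_cases h : 0 ≤ g (u j)
      · simp [hvdef, h, abs_of_nonneg (hu j)]
      · simp [hvdef, h, abs_neg, abs_of_nonneg (hu j)]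
    have hbound : ∀ N : ℕ, (N : ℝ) * ε ≤ ‖g‖ * (2 * C) := by
      intro N
      set s : E := ∑ j ∈ Finset.range N, v j with hsdef
      have hab : |s| ≤ x (c N) - x (c 0) := by
        calc |s| ≤ ∑ j ∈ Finset.range N, |v j| := aux_abs_sum_le _ _
        _ = ∑ j ∈ Finset.range N, u j := by simp [hvabs]
        _ = x (c N) - x (c 0) := by
              simp only [hudef]
              exact Finset.sum_range_sub (fun j => x (c j)) N
      have hnorm : ‖s‖ ≤ ‖x (c N) - x (c 0)‖ := by
        apply norm_le_norm_of_abs_le_abs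
        rwa [abs_of_nonneg (sub_nonneg.2 (hx (hcm (Nat.zero_le N))))]
      have hnorm2 : ‖s‖ ≤ 2 * C := by
        have := norm_sub_le (x (c N)) (x (c 0))
        have h1 := hC (c N); have h2 := hC (c 0)
        linarith
      have hgs : (N : ℝ) * ε ≤ g s := by
        have : ∑ j ∈ Finset.range N, ε ≤ ∑ j ∈ Finset.range N, g (v j) :=
          Finset.sum_le_sum (fun j _ => (hgv j).le)
        simpa [hsdef, map_sum, mul_comm] using this
      have hgs2 : g s ≤ ‖g‖ * ‖s‖ := by
        calc g s ≤ |g s| := le_abs_self _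
        _ = ‖g s‖ := (Real.norm_eq_abs _).symm
        _ ≤ ‖g‖ * ‖s‖ := g.le_opNorm s
      have : g s ≤ ‖g‖ * (2 * C) := by
        calc g s ≤ ‖g‖ * ‖s‖ := hgs2
        _ ≤ ‖g‖ * (2 * C) := mul_le_mul_of_nonneg_left hnorm2 (norm_nonneg g)
      linarith
    obtain ⟨N, hN⟩ := exists_nat_gt (‖g‖ * (2 * C) / ε)
    have : ‖g‖ * (2 * C) < (N : ℝ) * ε := by
      rw [div_lt_iff₀ hε] at hN
      exact hN
    linarith [hbound N]
  choose A hA using fun n : ℕ => C1 (1 / ((n:ℝ) + 1)) (by positivity)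
  set b : ℕ → ℝ := fun n => g (x (A n)) with hbdef
  classical
  have hbd : ∀ n m : ℕ, |b m - b n| ≤ 1 / ((n:ℝ) + 1) + 1 / ((m:ℝ) + 1) := by
    intro n m
    obtain ⟨z, hz⟩ := Finset.exists_le ({A n, A m} : Finset ι)
    have h1 := hA n z (hz (A n) (by simp))
    have h2 := hA m z (hz (A m) (by simp))
    calc |b m - b n| ≤ |b m - g (x z)| + |g (x z) - b n| := abs_sub_le _ _ _
    _ = |g (x z) - b m| + |g (x z) - b n| := by rw [abs_sub_comm]
    _ ≤ 1 / ((m:ℝ) + 1) + 1 / ((n:ℝ) + 1) := add_le_add h2 h1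
    _ = 1 / ((n:ℝ) + 1) + 1 / ((m:ℝ) + 1) := add_comm _ _
  have hcb : CauchySeq b := by
    apply cauchySeq_of_le_tendsto_0 (fun N : ℕ => 2 / ((N:ℝ) + 1))
    · intro n m N hn hm
      rw [Real.dist_eq]
      have h1 : 1 / ((n:ℝ) + 1) ≤ 1 / ((N:ℝ) + 1) := by
        apply one_div_le_one_div_of_le (by positivity)
        exact_mod_cast add_le_add_left (Nat.cast_le.mpr hn) 1
      have h2 : 1 / ((m:ℝ) + 1) ≤ 1 / ((N:ℝ) + 1) := by
        apply one_div_le_one_div_of_le (by positivity)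
        exact_mod_cast add_le_add_left (Nat.cast_le.mpr hm) 1
      have := hbd m n
      calc |b n - b m| ≤ 1 / ((m:ℝ) + 1) + 1 / ((n:ℝ) + 1) := this
      _ ≤ 1 / ((N:ℝ) + 1) + 1 / ((N:ℝ) + 1) := add_le_add h2 h1
      _ = 2 / ((N:ℝ) + 1) := by ring
    · have := tendsto_one_div_add_atTop_nhds_zero_nat (𝕜 := ℝ)
      have h2 : (fun N : ℕ => 2 / ((N:ℝ) + 1)) = fun N : ℕ => 2 * (1 / ((N:ℝ) + 1)) := by
        funext N; ring
      rw [h2]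
      simpa using this.const_mul 2
  obtain ⟨t, ht⟩ := cauchySeq_tendsto_of_complete hcb
  refine ⟨t, ?_⟩
  have hbt : ∀ n : ℕ, |t - b n| ≤ 1 / ((n:ℝ) + 1) := by
    intro n
    have l1 : Filter.Tendsto (fun m => |b m - b n|) Filter.atTop (nhds |t - b n|) :=
      ((ht.sub_const (b n)).abs)
    have l2 : Filter.Tendsto (fun m : ℕ => 1 / ((n:ℝ) + 1) + 1 / ((m:ℝ) + 1)) Filter.atTop
        (nhds (1 / ((n:ℝ) + 1))) := by
      simpa using ((tendsto_const_nhds : Filter.Tendsto (fun _ : ℕ => 1 / ((n:ℝ) + 1)) Filter.atTop _).add tendsto_one_div_add_atTop_nhds_zero_nat)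
    exact le_of_tendsto_of_tendsto' l1 l2 (fun m => hbd n m)
  intro ε hε
  obtain ⟨n, hn⟩ := exists_nat_gt (2 / ε)
  have hn2 : 2 / ((n:ℝ) + 1) ≤ ε := by
    rw [div_le_iff₀ (by positivity)]
    rw [div_lt_iff₀ hε] at hn
    nlinarith
  refine ⟨A n, fun α hα => ?_⟩
  have h1 := hA n α hα
  have h2 := hbt n
  calc |g (x α) - t| ≤ |g (x α) - b n| + |b n - t| := abs_sub_le _ _ _
  _ = |g (x α) - b n| + |t - b n| := by rw [abs_sub_comm (b n) t]
  _ ≤ 1 / ((n:ℝ) + 1) + 1 / ((n:ℝ) + 1) := add_le_add h1 h2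
  _ = 2 / ((n:ℝ) + 1) := by ring
  _ ≤ ε := hn2


/-- every finite rank continuous operator between normed lattices is Levi. -/
theorem finiteRank_isLevi {E F : Type*}
    [NormedAddCommGroup E] [Lattice E] [HasSolidNorm E] [IsOrderedAddMonoid E] [NormedSpace ℝ E]
    [NormedAddCommGroup F] [Lattice F] [HasSolidNorm F] [IsOrderedAddMonoid F] [NormedSpace ℝ F]
    (T : E →L[ℝ] F)
    (hfr : ∃ (n : ℕ) (f : Fin n → (E →L[ℝ] ℝ)) (y : Fin n → F),
      ∀ x, T x = ∑ k, f k x • y k) :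
    IsLeviMap (T : E → F) := by
  obtain ⟨n, f, y, hT⟩ := hfr
  intro ι _inst1 _inst2 _inst3 x hx hbdd
  obtain ⟨C, hC⟩ := hbdd
  classical
  choose t ht using fun k => aux_key_conv hx hC (f k)
  set Φ : E →ₗ[ℝ] (Fin n → ℝ) := LinearMap.pi (fun k => (f k).toLinearMap) with hΦdef
  have hΦap : ∀ (e : E) (k : Fin n), Φ e k = f k e := fun e k => rfl
  have hclosed : IsClosed ((LinearMap.range Φ : Submodule ℝ (Fin n → ℝ)) : Set (Fin n → ℝ)) :=
    Submodule.closed_of_finiteDimensional _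
  have hmem : t ∈ closure ((LinearMap.range Φ : Submodule ℝ (Fin n → ℝ)) : Set (Fin n → ℝ)) := by
    rw [Metric.mem_closure_iff]
    intro ε hε
    choose A hA using fun k => ht k (ε/2) (half_pos hε)
    obtain ⟨z, hz⟩ := Finset.exists_le (Finset.univ.image A)
    refine ⟨Φ (x z), ⟨x z, rfl⟩, ?_⟩
    have hle : dist t (Φ (x z)) ≤ ε/2 := by
      rw [dist_pi_le_iff (le_of_lt (half_pos hε))]
      intro k
      rw [Real.dist_eq, hΦap, abs_sub_comm]
      exact hA k z (hz (A k) (Finset.mem_image_of_mem A (Finset.mem_univ k)))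
    linarith
  rw [hclosed.closure_eq] at hmem
  obtain ⟨x₀, hx₀⟩ := hmem
  have ht0 : ∀ k, f k x₀ = t k := fun k => by
    have := congrFun hx₀ k
    rwa [hΦap] at this
  refine ⟨x₀, ?_⟩
  set u : F := ∑ k, |y k| with hudef
  have hu : (0:F) ≤ u := Finset.sum_nonneg (fun k _ => abs_nonneg (y k))
  refine ⟨(fun r : ℝ => r • u) '' Set.Ioi 0, ⟨1 • u, ⟨1, by norm_num, rfl⟩⟩, ?_, ?_, ?_⟩
  · rintro _ ⟨r, hr, rfl⟩ _ ⟨s, hs, rfl⟩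
    exact ⟨min r s • u, ⟨min r s, Set.mem_Ioi.mpr (lt_min hr hs), rfl⟩,
      aux_smul_le_smul (min_le_left r s) hu, aux_smul_le_smul (min_le_right r s) hu⟩
  · constructor
    · rintro _ ⟨r, hr, rfl⟩
      exact aux_smul_nonneg (le_of_lt hr) hu
    · intro b hb
      have hbp : ∀ r : ℝ, 0 < r → b⁺ ≤ r • u := by
        intro r hr
        have h1 : b ≤ r • u := hb ⟨r, hr, rfl⟩
        rw [posPart_def]
        exact sup_le h1 (aux_smul_nonneg hr.le hu)
      have hn : ∀ r : ℝ, 0 < r → ‖b⁺‖ ≤ r * ‖u‖ := by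
        intro r hr
        have h1 : |b⁺| ≤ |r • u| := by
          rw [abs_of_nonneg (posPart_nonneg b), abs_of_nonneg (aux_smul_nonneg hr.le hu)]
          exact hbp r hr
        have h2 := norm_le_norm_of_abs_le_abs h1
        rwa [norm_smul, Real.norm_eq_abs, abs_of_pos hr] at h2
      have hzero : ‖b⁺‖ ≤ 0 := by
        by_contra hcon
        push_neg at hcon
        have h2 := hn (‖b⁺‖ / (2 * (‖u‖ + 1))) (by positivity)
        have h3 : (0:ℝ) ≤ ‖u‖ := norm_nonneg u
        rw [div_mul_eq_mul_div, le_div_iff₀ (by positivity)] at h2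
        nlinarith
      have : b⁺ = 0 := by
        rw [← norm_le_zero_iff]
        exact hzero
      exact posPart_eq_zero.mp this
  · rintro _ ⟨r, hr, rfl⟩
    choose A hA using fun k => ht k r hr
    obtain ⟨z, hz⟩ := Finset.exists_le (Finset.univ.image A)
    refine ⟨z, fun α hα => ?_⟩
    have hk : ∀ k, |f k (x α) - f k x₀| ≤ r := by
      intro k
      rw [ht0 k]
      exact hA k α (le_trans (hz (A k) (Finset.mem_image_of_mem A (Finset.mem_univ k))) hα)
    have heq : T (x α) - T x₀ = ∑ k, (f k (x α) - f k x₀) • y k := by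
      rw [hT (x α), hT x₀, ← Finset.sum_sub_distrib]
      congr 1
      funext k
      rw [sub_smul]
    calc |T (x α) - T x₀| = |∑ k, (f k (x α) - f k x₀) • y k| := by rw [heq]
    _ ≤ ∑ k, |(f k (x α) - f k x₀) • y k| := aux_abs_sum_le _ _
    _ ≤ ∑ k, r • |y k| := by
        refine Finset.sum_le_sum (fun k _ => ?_)
        exact (aux_abs_smul_le _ _).trans (aux_smul_le_smul (hk k) (abs_nonneg (y k)))
    _ = r • u := by rw [hudef, Finset.smul_sum]
end

section
/- Every positive compact operator from a normed lattice E to a normed lattice F is a completely quasi Levi operator, i.e., for every norm-bounded increasing net (x_α) in E the net (T x_α) order-converges in F. -/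
/-- A monotone net with a cluster point order-converges to that cluster point. -/
lemma oConvNet_of_monotone_clusterPt {ι F : Type*} [Nonempty ι] [Preorder ι]
    [IsDirected ι (· ≤ ·)] [NormedAddCommGroup F] [Lattice F] [HasSolidNorm F] [IsOrderedAddMonoid F]
    (y : ι → F) (hy : Monotone y) (y₀ : F)
    (hcl : ClusterPt y₀ (Filter.map y Filter.atTop)) :
    OConvNet y y₀ := by
  have hub : ∀ α, y α ≤ y₀ := by
    intro α
    have hmem : y '' Set.Ici α ∈ Filter.map y Filter.atTop :=
      Filter.image_mem_map (Filter.mem_atTop α)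
    have h1 : y₀ ∈ closure (y '' Set.Ici α) :=
      mem_closure_iff_clusterPt.mpr (hcl.mono (Filter.le_principal_iff.mpr hmem))
    have h2 : closure (y '' Set.Ici α) ⊆ Set.Ici (y α) := by
      apply closure_minimal _ isClosed_Ici
      rintro _ ⟨β, hβ, rfl⟩
      exact hy hβ
    exact h2 h1
  have hfreq : ∀ ε : ℝ, 0 < ε → ∃ α, ‖y α - y₀‖ < ε := by
    intro ε hε
    have h := clusterPt_iff_nonempty.mp hcl (Metric.ball_mem_nhds y₀ hε)
      (Filter.image_mem_map (Filter.univ_mem (f := Filter.atTop (α := ι))))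
    obtain ⟨_, hb, α, -, rfl⟩ := h
    exact ⟨α, by simpa [dist_eq_norm] using hb⟩
  refine ⟨Set.range (fun α => y₀ - y α), Set.range_nonempty _, ?_, ⟨?_, ?_⟩, ?_⟩
  · rintro _ ⟨α, rfl⟩ _ ⟨β, rfl⟩
    obtain ⟨γ, hγα, hγβ⟩ := directed_of (· ≤ ·) α β
    exact ⟨y₀ - y γ, ⟨γ, rfl⟩, sub_le_sub_left (hy hγα) _, sub_le_sub_left (hy hγβ) _⟩
  · rintro _ ⟨α, rfl⟩
    simpa using hub α
  · intro u hu
    have hkey : ∀ ε : ℝ, 0 < ε → ‖u⁺‖ ≤ ε := by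
      intro ε hε
      obtain ⟨α, hα⟩ := hfreq ε hε
      have h1 : u⁺ ≤ y₀ - y α := by
        rw [posPart_def]
        exact sup_le (hu ⟨α, rfl⟩) (sub_nonneg.mpr (hub α))
      have h2 : |u⁺| ≤ |y₀ - y α| := by
        rw [abs_of_nonneg (posPart_nonneg u), abs_of_nonneg (sub_nonneg.mpr (hub α))]
        exact h1
      have h3 : ‖u⁺‖ ≤ ‖y₀ - y α‖ := norm_le_norm_of_abs_le_abs h2
      rw [norm_sub_rev] at h3
      exact h3.trans hα.le
    have hz : ‖u⁺‖ ≤ 0 := by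
      by_contra h
      push_neg at h
      have := hkey (‖u⁺‖ / 2) (by linarith)
      linarith
    have : u⁺ = 0 := norm_eq_zero.mp (le_antisymm hz (norm_nonneg _))
    exact posPart_eq_zero.mp this
  · rintro _ ⟨β, rfl⟩
    exact ⟨β, fun α hα => by
      rw [abs_of_nonpos (sub_nonpos.mpr (hub α))]
      simpa using sub_le_sub_left (hy hα) y₀⟩

/-- every positive compact operator between normed lattices is completely
quasi Levi. -/
theorem positive_compact_isCqLevi {E F : Type*}
    [NormedAddCommGroup E] [Lattice E] [HasSolidNorm E] [IsOrderedAddMonoid E]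
    [NormedSpace ℝ E]
    [NormedAddCommGroup F] [Lattice F] [HasSolidNorm F] [IsOrderedAddMonoid F]
    [NormedSpace ℝ F]
    (T : E →ₗ[ℝ] F) (hpos : ∀ x : E, 0 ≤ x → 0 ≤ T x)
    (hcomp : IsCompactOperator (T : E → F)) :
    IsCqLeviMap (T : E → F) := by
  intro ι _ _ _ x hx ⟨C, hC⟩
  -- the image net is monotone
  have hmono : Monotone (fun α => T (x α)) := by
    intro α β hαβ
    have := hpos (x β - x α) (sub_nonneg.mpr (hx hαβ))
    rw [map_sub] at this
    exact sub_nonneg.mp this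
  -- the image net lies in a compact set
  have hK : IsCompact (closure (T '' Metric.closedBall 0 C)) :=
    hcomp.isCompact_closure_image_closedBall (𝕜₁ := ℝ) C
  have hsub : ∀ α, T (x α) ∈ closure (T '' Metric.closedBall 0 C) := fun α =>
    subset_closure ⟨x α, by simpa [Metric.mem_closedBall, dist_eq_norm] using hC α, rfl⟩
  -- get a cluster point
  have hle : Filter.map (fun α => T (x α)) Filter.atTop ≤
      Filter.principal (closure (T '' Metric.closedBall 0 C)) := by
    rw [Filter.le_principal_iff, Filter.mem_map]
    exact Filter.Eventually.of_forall hsub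
  obtain ⟨y₀, -, hcl⟩ := hK.exists_clusterPt hle
  exact ⟨y₀, oConvNet_of_monotone_clusterPt _ hmono y₀ hcl⟩
end

section
/- Every quasi σ-Levi operator from a Banach lattice E to a normed lattice F is norm continuous. -/
/-- every quasi σ-Levi operator from a Banach lattice to a normed lattice is
norm continuous. -/
theorem qSigmaLevi_continuous {E F : Type*}
    [NormedAddCommGroup E] [Lattice E] [IsOrderedAddMonoid E] [HasSolidNorm E] [NormedSpace ℝ E] [CompleteSpace E]
    [NormedAddCommGroup F] [Lattice F] [IsOrderedAddMonoid F] [HasSolidNorm F] [NormedSpace ℝ F]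
    (T : E →ₗ[ℝ] F) (hT : IsQSigmaLeviMap (T : E → F)) :
    Continuous (T : E → F) := by
  by_contra hc
  have hub : ∀ C : ℝ, ∃ x : E, C * ‖x‖ < ‖T x‖ := by
    intro C
    by_contra h'
    push_neg at h'
    exact hc (AddMonoidHomClass.continuous_of_bound T C h')
  have key : ∀ n : ℕ, ∃ v : E, 0 ≤ v ∧ ‖v‖ ≤ (1/2 : ℝ) ^ n ∧ (n : ℝ) < ‖T v‖ := by
    intro n
    obtain ⟨x, hx⟩ := hub ((2 * n + 2) * 2 ^ n)
    have hxne : x ≠ 0 := by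
      rintro rfl
      simp at hx
    have hxpos : (0 : ℝ) < ‖x‖ := norm_pos_iff.mpr hxne
    have h2n : (0 : ℝ) < 2 ^ n := by positivity
    set c : ℝ := ((2 : ℝ) ^ n * ‖x‖)⁻¹ with hcdef
    have hc0 : 0 < c := by positivity
    set u : E := c • x with hudef
    have hTu : 2 * (n : ℝ) + 2 < ‖T u‖ := by
      have h1 : ‖T u‖ = c * ‖T x‖ := by
        rw [hudef, map_smul, norm_smul, Real.norm_eq_abs, abs_of_pos hc0]
      rw [h1]
      have h2 : c * ((2 * n + 2) * 2 ^ n * ‖x‖) < c * ‖T x‖ := by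
        apply mul_lt_mul_of_pos_left _ hc0
        linarith [hx]
      calc 2 * (n : ℝ) + 2 = c * ((2 * n + 2) * 2 ^ n * ‖x‖) := by
            rw [hcdef]; field_simp
        _ < c * ‖T x‖ := h2
    have hnu : ‖u‖ = (1/2 : ℝ) ^ n := by
      rw [hudef, norm_smul, Real.norm_eq_abs, abs_of_pos hc0, hcdef]
      field_simp
      rw [← mul_pow]; norm_num
    have hsplit : ‖T u‖ ≤ ‖T u⁺‖ + ‖T u⁻‖ := by
      have : (T u : F) = T u⁺ - T u⁻ := by
        rw [← map_sub]; congr 1; exact (posPart_sub_negPart u).symm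
      rw [this]
      exact norm_sub_le _ _
    have habs_eq : u⁺ + u⁻ = |u| := posPart_add_negPart u
    have hple : ‖u⁺‖ ≤ ‖u‖ := by
      apply norm_le_norm_of_abs_le_abs
      rw [abs_of_nonneg (posPart_nonneg u), ← habs_eq]
      exact le_add_of_nonneg_right (negPart_nonneg u)
    have hnle : ‖u⁻‖ ≤ ‖u‖ := by
      apply norm_le_norm_of_abs_le_abs
      rw [abs_of_nonneg (negPart_nonneg u), ← habs_eq]
      exact le_add_of_nonneg_left (posPart_nonneg u)
    rcases le_total ‖T u⁺‖ ‖T u⁻‖ with h | h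
    · exact ⟨u⁻, negPart_nonneg u, hnu ▸ hnle, by nlinarith⟩
    · exact ⟨u⁺, posPart_nonneg u, hnu ▸ hple, by nlinarith⟩
  choose v hv0 hvn hvT using key
  set y : ℕ → E := fun N => ∑ k ∈ Finset.range N, v k with hydef
  have hymono : Monotone y := by
    apply monotone_nat_of_le_succ
    intro n
    simp only [hydef, Finset.sum_range_succ]
    exact le_add_of_nonneg_right (hv0 n)
  have hybdd : ∃ C, ∀ N, ‖y N‖ ≤ C := by
    refine ⟨2, fun N => ?_⟩
    calc ‖y N‖ ≤ ∑ k ∈ Finset.range N, ‖v k‖ := norm_sum_le _ _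
      _ ≤ ∑ k ∈ Finset.range N, (1/2 : ℝ) ^ k := Finset.sum_le_sum fun k _ => hvn k
      _ ≤ 2 := sum_geometric_two_le N
  obtain ⟨D, ⟨d, hd⟩, -, hglb, hD⟩ := hT y hymono hybdd
  have hd0 : (0 : F) ≤ d := hglb.1 hd
  obtain ⟨p₀, hp⟩ := hD d hd
  set N : ℕ := max (max p₀.1 p₀.2) ⌈‖d‖⌉₊ with hNdef
  have hle : p₀ ≤ (N + 1, N) := by
    constructor
    · exact le_trans (le_max_left _ _) (le_trans (le_max_left _ _) (Nat.le_succ_of_le le_rfl))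
    · exact le_trans (le_max_right _ _) (le_max_left _ _)
  have habs := hp (N + 1, N) hle
  simp only [sub_zero] at habs
  have hdiff : T (y (N + 1)) - T (y N) = T (v N) := by
    rw [← map_sub]
    congr 1
    simp [hydef, Finset.sum_range_succ]
  rw [hdiff] at habs
  have hnorm : ‖T (v N)‖ ≤ ‖d‖ := by
    apply norm_le_norm_of_abs_le_abs
    rwa [abs_of_nonneg hd0]
  have h1 : (N : ℝ) < ‖T (v N)‖ := hvT N
  have h2 : ‖d‖ ≤ (N : ℝ) := by
    calc ‖d‖ ≤ (⌈‖d‖⌉₊ : ℝ) := Nat.le_ceil _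
      _ ≤ (N : ℝ) := by exact_mod_cast Nat.cast_le.mpr (le_max_right _ _)
  linarith
end

section
/- Let (β_k) be a strictly positive real sequence with β_k → 0 and let T : c → c₀ be the diagonal operator T a = Σ_k β_k a_k e_k. Then T is a completely quasi Levi operator but not a σ-Levi operator. -/
open Filter Topology

/-- The subspace `c` of convergent real sequences. -/
def cSub : Submodule ℝ (ℕ → ℝ) where
  carrier := {x | ∃ l : ℝ, Tendsto x atTop (nhds l)}
  add_mem' := by rintro x y ⟨l, hl⟩ ⟨m, hm⟩; exact ⟨l + m, hl.add hm⟩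
  zero_mem' := ⟨0, tendsto_const_nhds⟩
  smul_mem' := by rintro c x ⟨l, hl⟩; exact ⟨c * l, hl.const_mul c⟩

/-- The subspace `c₀` of real null sequences. -/
def c0Sub : Submodule ℝ (ℕ → ℝ) where
  carrier := {x | Tendsto x atTop (nhds 0)}
  add_mem' := by intro x y hx hy; have h := hx.add hy; rw [add_zero] at h; exact h
  zero_mem' := tendsto_const_nhds
  smul_mem' := by intro c x hx; have h := hx.const_mul c; rw [mul_zero] at h; exact h

/-- The subspace `ℓ^∞` of bounded real sequences. -/
def LinfSub : Submodule ℝ (ℕ → ℝ) where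
  carrier := {x | ∃ C : ℝ, ∀ n, |x n| ≤ C}
  add_mem' := by
    rintro x y ⟨C, hC⟩ ⟨D, hD⟩
    exact ⟨C + D, fun n => (abs_add_le _ _).trans (add_le_add (hC n) (hD n))⟩
  zero_mem' := ⟨0, fun n => by simp⟩
  smul_mem' := by
    rintro c x ⟨C, hC⟩
    exact ⟨|c| * C, fun n => by
      simpa [abs_mul] using mul_le_mul_of_nonneg_left (hC n) (abs_nonneg c)⟩

instance : Lattice cSub :=
  { (inferInstance : PartialOrder cSub) with
    sup := fun x y => ⟨x.1 ⊔ y.1, by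
      obtain ⟨l, hl⟩ := x.2; obtain ⟨m, hm⟩ := y.2; exact ⟨l ⊔ m, hl.max hm⟩⟩
    inf := fun x y => ⟨x.1 ⊓ y.1, by
      obtain ⟨l, hl⟩ := x.2; obtain ⟨m, hm⟩ := y.2; exact ⟨l ⊓ m, hl.min hm⟩⟩
    le_sup_left := fun a b => (le_sup_left : a.1 ≤ a.1 ⊔ b.1)
    le_sup_right := fun a b => (le_sup_right : b.1 ≤ a.1 ⊔ b.1)
    sup_le := fun a b c h₁ h₂ => (sup_le h₁ h₂ : a.1 ⊔ b.1 ≤ c.1)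
    inf_le_left := fun a b => (inf_le_left : a.1 ⊓ b.1 ≤ a.1)
    inf_le_right := fun a b => (inf_le_right : a.1 ⊓ b.1 ≤ b.1)
    le_inf := fun a b c h₁ h₂ => (le_inf h₁ h₂ : a.1 ≤ b.1 ⊓ c.1) }

instance : Lattice c0Sub :=
  { (inferInstance : PartialOrder c0Sub) with
    sup := fun x y => ⟨x.1 ⊔ y.1, by
      have := x.2.max y.2; rw [max_self] at this; exact this⟩
    inf := fun x y => ⟨x.1 ⊓ y.1, by
      have := x.2.min y.2; rw [min_self] at this; exact this⟩
    le_sup_left := fun a b => (le_sup_left : a.1 ≤ a.1 ⊔ b.1)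
    le_sup_right := fun a b => (le_sup_right : b.1 ≤ a.1 ⊔ b.1)
    sup_le := fun a b c h₁ h₂ => (sup_le h₁ h₂ : a.1 ⊔ b.1 ≤ c.1)
    inf_le_left := fun a b => (inf_le_left : a.1 ⊓ b.1 ≤ a.1)
    inf_le_right := fun a b => (inf_le_right : a.1 ⊓ b.1 ≤ b.1)
    le_inf := fun a b c h₁ h₂ => (le_inf h₁ h₂ : a.1 ≤ b.1 ⊓ c.1) }

instance : Lattice LinfSub :=
  { (inferInstance : PartialOrder LinfSub) with
    sup := fun x y => ⟨x.1 ⊔ y.1, by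
      obtain ⟨C, hC⟩ := x.2; obtain ⟨D, hD⟩ := y.2
      exact ⟨C ⊔ D, fun n => by
        have h1 := hC n; have h2 := hD n
        simp only [Pi.sup_apply]
        rcases le_total (x.1 n) (y.1 n) with h | h
        · rw [sup_eq_right.2 h]; exact h2.trans le_sup_right
        · rw [sup_eq_left.2 h]; exact h1.trans le_sup_left⟩⟩
    inf := fun x y => ⟨x.1 ⊓ y.1, by
      obtain ⟨C, hC⟩ := x.2; obtain ⟨D, hD⟩ := y.2
      exact ⟨C ⊔ D, fun n => by
        have h1 := hC n; have h2 := hD n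
        simp only [Pi.inf_apply]
        rcases le_total (x.1 n) (y.1 n) with h | h
        · rw [inf_eq_left.2 h]; exact h1.trans le_sup_left
        · rw [inf_eq_right.2 h]; exact h2.trans le_sup_right⟩⟩
    le_sup_left := fun a b => (le_sup_left : a.1 ≤ a.1 ⊔ b.1)
    le_sup_right := fun a b => (le_sup_right : b.1 ≤ a.1 ⊔ b.1)
    sup_le := fun a b c h₁ h₂ => (sup_le h₁ h₂ : a.1 ⊔ b.1 ≤ c.1)
    inf_le_left := fun a b => (inf_le_left : a.1 ⊓ b.1 ≤ a.1)
    inf_le_right := fun a b => (inf_le_right : a.1 ⊓ b.1 ≤ b.1)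
    le_inf := fun a b c h₁ h₂ => (le_inf h₁ h₂ : a.1 ≤ b.1 ⊓ c.1) }

noncomputable instance : Norm cSub := ⟨fun x => ⨆ n, |x.1 n|⟩
noncomputable instance : Norm c0Sub := ⟨fun x => ⨆ n, |x.1 n|⟩
noncomputable instance : Norm LinfSub := ⟨fun x => ⨆ n, |x.1 n|⟩

section Aux

lemma c0_le_iff {z w : c0Sub} : z ≤ w ↔ ∀ n, z.1 n ≤ w.1 n := Iff.rfl
lemma c_le_iff {z w : cSub} : z ≤ w ↔ ∀ n, z.1 n ≤ w.1 n := Iff.rfl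
lemma c0_sub_apply (z w : c0Sub) (n : ℕ) : (z - w).1 n = z.1 n - w.1 n := rfl
lemma c0_abs_apply (z : c0Sub) (n : ℕ) : (|z|).1 n = |z.1 n| := by
  show (z ⊔ -z).1 n = _; rfl
lemma c0_zero_apply (n : ℕ) : (0 : c0Sub).1 n = 0 := rfl

end Aux

/-- for a strictly positive null sequence `β`, the diagonal operator
`T : c → c₀`, `T a = ∑ β k * a k • e k`, is completely quasi Levi but not σ-Levi. -/
theorem diagonal_c_c0_cqLevi_not_sigmaLevi (β : ℕ → ℝ)
    (hβpos : ∀ k, 0 < β k) (hβ0 : Tendsto β atTop (nhds 0))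
    (T : cSub → c0Sub) (hT : ∀ (a : cSub) (k : ℕ), (T a).1 k = β k * a.1 k) :
    IsCqLeviMap T ∧ ¬ IsSigmaLeviMap T := by
  constructor
  · -- completely quasi Levi
    intro ι _ _ _ x hmono hbound
    obtain ⟨C, hC⟩ := hbound
    have hbdd : ∀ α n, |(x α).1 n| ≤ C := by
      intro α n
      refine le_trans ?_ (hC α)
      obtain ⟨l, hl⟩ := (x α).2
      exact le_ciSup hl.abs.bddAbove_range n
    set s : ℕ → ℝ := fun n => ⨆ α, (x α).1 n with hs
    have hbddα : ∀ n, BddAbove (Set.range fun α => (x α).1 n) :=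
      fun n => ⟨C, by rintro _ ⟨α, rfl⟩; exact (abs_le.1 (hbdd α n)).2⟩
    have hxle : ∀ α n, (x α).1 n ≤ s n := fun α n => le_ciSup (hbddα n) α
    have hsC : ∀ n, |s n| ≤ C := by
      intro n
      rw [abs_le]
      refine ⟨?_, ciSup_le fun α => (abs_le.1 (hbdd α n)).2⟩
      exact le_trans (abs_le.1 (hbdd (Classical.arbitrary ι) n)).1
        (hxle (Classical.arbitrary ι) n)
    have hy0mem : Tendsto (fun n => β n * s n) atTop (nhds 0) := by
      have h2 : Tendsto (fun n => β n * C) atTop (nhds 0) := by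
        simpa using hβ0.mul_const C
      refine squeeze_zero_norm (fun n => ?_) h2
      rw [Real.norm_eq_abs, abs_mul, abs_of_pos (hβpos n)]
      exact mul_le_mul_of_nonneg_left (hsC n) (hβpos n).le
    have humem : ∀ α, Tendsto (fun n => β n * (s n - (x α).1 n)) atTop (nhds 0) := by
      intro α
      have h2 : Tendsto (fun n => β n * (2 * C)) atTop (nhds 0) := by
        simpa using hβ0.mul_const (2 * C)
      refine squeeze_zero_norm (fun n => ?_) h2
      rw [Real.norm_eq_abs, abs_mul, abs_of_pos (hβpos n)]
      refine mul_le_mul_of_nonneg_left ?_ (hβpos n).le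
      have h3 := abs_le.1 (hbdd α n)
      have h4 := abs_le.1 (hsC n)
      rw [abs_le]; constructor <;> linarith
    set u : ι → c0Sub := fun α => ⟨fun n => β n * (s n - (x α).1 n), humem α⟩ with hu
    have hule : ∀ {α α'}, x α ≤ x α' → u α' ≤ u α := by
      intro α α' h
      refine c0_le_iff.2 fun n => ?_
      exact mul_le_mul_of_nonneg_left (sub_le_sub_left (h n) _) (hβpos n).le
    refine ⟨⟨fun n => β n * s n, hy0mem⟩, Set.range u, Set.range_nonempty u, ?_, ?_, ?_⟩
    · rintro _ ⟨α, rfl⟩ _ ⟨α', rfl⟩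
      obtain ⟨γ, hγ, hγ'⟩ := directed_of (· ≤ ·) α α'
      exact ⟨u γ, Set.mem_range_self γ, hule (hmono hγ), hule (hmono hγ')⟩
    · constructor
      · rintro _ ⟨α, rfl⟩
        refine c0_le_iff.2 fun n => ?_
        exact mul_nonneg (hβpos n).le (sub_nonneg.2 (hxle α n))
      · intro w hw
        refine c0_le_iff.2 fun n => ?_
        rw [c0_zero_apply]
        have hdiv : ∀ α, (x α).1 n ≤ s n - w.1 n / β n := by
          intro α
          have h1 : w.1 n ≤ β n * (s n - (x α).1 n) :=
            c0_le_iff.1 (hw (Set.mem_range_self α)) n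
          have h2 : w.1 n / β n ≤ s n - (x α).1 n := by
            rw [div_le_iff₀ (hβpos n)]; linarith
          linarith
        have h2 : s n ≤ s n - w.1 n / β n := ciSup_le hdiv
        have h3 : w.1 n / β n ≤ 0 := by linarith
        have h4 := mul_nonpos_of_nonpos_of_nonneg h3 (hβpos n).le
        rwa [div_mul_cancel₀ _ (hβpos n).ne'] at h4
    · rintro _ ⟨α₀, rfl⟩
      refine ⟨α₀, fun α hα => c0_le_iff.2 fun n => ?_⟩
      rw [c0_abs_apply, c0_sub_apply, hT]
      show |β n * (x α).1 n - β n * s n| ≤ β n * (s n - (x α₀).1 n)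
      rw [← mul_sub, abs_mul, abs_of_pos (hβpos n), abs_sub_comm,
        abs_of_nonneg (sub_nonneg.2 (hxle α n))]
      exact mul_le_mul_of_nonneg_left (sub_le_sub_left (hmono hα n) _) (hβpos n).le
  · -- not σ-Levi
    intro hL
    have hxmem : ∀ n : ℕ, (fun k => if k < n ∧ Even k then (1 : ℝ) else 0) ∈ cSub := by
      intro n
      refine ⟨0, tendsto_const_nhds.congr' ?_⟩
      filter_upwards [eventually_ge_atTop n] with k hk
      rw [if_neg]; rintro ⟨h1, _⟩; omega
    set x : ℕ → cSub := fun n => ⟨fun k => if k < n ∧ Even k then 1 else 0, hxmem n⟩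
      with hxdef
    have hxmono : Monotone x := by
      intro n m hnm
      refine c_le_iff.2 fun k => ?_
      show (if k < n ∧ Even k then (1:ℝ) else 0) ≤ (if k < m ∧ Even k then (1:ℝ) else 0)
      split_ifs with h1 h2
      · exact le_refl 1
      · exact absurd ⟨lt_of_lt_of_le h1.1 hnm, h1.2⟩ h2
      · norm_num
      · exact le_refl 0
    have hxbdd : ∃ C, ∀ n, ‖x n‖ ≤ C := by
      refine ⟨1, fun n => ?_⟩
      show (⨆ k, |(x n).1 k|) ≤ 1
      refine ciSup_le fun k => ?_
      show |if k < n ∧ Even k then (1:ℝ) else 0| ≤ 1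
      split_ifs <;> norm_num
    obtain ⟨x₀, y, hanti, hglb, hdom⟩ := hL x hxmono hxbdd
    have hy0 : ∀ m k, 0 ≤ (y m).1 k := by
      intro m k
      obtain ⟨n₀, hn₀⟩ := hdom m
      have h2 := c0_le_iff.1 (hn₀ n₀ le_rfl) k
      rw [c0_abs_apply] at h2
      exact le_trans (abs_nonneg _) h2
    have hTx : ∀ k n, k < n → (T (x n)).1 k = if Even k then β k else 0 := by
      intro k n hn
      rw [hT]
      by_cases he : Even k
      · have h1 : (x n).1 k = 1 := if_pos ⟨hn, he⟩
        rw [h1, mul_one, if_pos he]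
      · have h1 : (x n).1 k = 0 := if_neg fun h => he h.2
        rw [h1, mul_zero, if_neg he]
    have hval : ∀ k, (T x₀).1 k = if Even k then β k else 0 := by
      intro k
      set t : ℝ := if Even k then β k else 0 with ht
      set d : ℝ := |t - (T x₀).1 k| with hd
      have hz : Tendsto (fun j => if j = k then d else 0) atTop (nhds 0) := by
        refine tendsto_const_nhds.congr' ?_
        filter_upwards [eventually_ge_atTop (k + 1)] with j hj
        rw [if_neg]; omega
      have hzle : ∀ m, (⟨_, hz⟩ : c0Sub) ≤ y m := by
        intro m
        refine c0_le_iff.2 fun j => ?_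
        by_cases hj : j = k
        · subst hj
          show (if j = j then d else 0) ≤ (y m).1 j
          rw [if_pos rfl]
          obtain ⟨n₀, hn₀⟩ := hdom m
          have h2 := c0_le_iff.1 (hn₀ (max n₀ (j + 1)) (le_max_left _ _)) j
          rw [c0_abs_apply, c0_sub_apply,
            hTx j _ (lt_of_lt_of_le (Nat.lt_succ_self j) (le_max_right _ _))] at h2
          exact h2
        · show (if j = k then d else 0) ≤ (y m).1 j
          rw [if_neg hj]
          exact hy0 m j
      have hle0 : (⟨_, hz⟩ : c0Sub) ≤ 0 :=
        hglb.2 (by rintro _ ⟨m, rfl⟩; exact hzle m)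
      have hd0 : d ≤ 0 := by
        have h5 := c0_le_iff.1 hle0 k
        simpa using h5
      have : d = 0 := le_antisymm hd0 (abs_nonneg _)
      have h3 := abs_eq_zero.1 this
      linarith [sub_eq_zero.1 h3]
    have hx0 : ∀ k, x₀.1 k = if Even k then 1 else 0 := by
      intro k
      have h := hval k
      rw [hT] at h
      by_cases he : Even k
      · rw [if_pos he] at h ⊢
        exact mul_left_cancel₀ (hβpos k).ne' (h.trans (mul_one _).symm)
      · rw [if_neg he] at h ⊢
        exact (mul_eq_zero.1 h).resolve_left (hβpos k).ne'
    obtain ⟨l, hl⟩ := x₀.2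
    have h1 : Tendsto (fun n : ℕ => x₀.1 (2 * n)) atTop (nhds l) :=
      hl.comp (StrictMono.tendsto_atTop fun a b h => by omega)
    have h0 : Tendsto (fun n : ℕ => x₀.1 (2 * n + 1)) atTop (nhds l) :=
      hl.comp (StrictMono.tendsto_atTop fun a b h => by omega)
    have e1 : (fun n : ℕ => x₀.1 (2 * n)) = fun _ => (1 : ℝ) := by
      funext n; rw [hx0, if_pos (even_two_mul n)]
    have e0 : (fun n : ℕ => x₀.1 (2 * n + 1)) = fun _ => (0 : ℝ) := by
      funext n; rw [hx0, if_neg fun h => (Nat.even_add_one.mp h) (even_two_mul n)]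
    rw [e1] at h1
    rw [e0] at h0
    have hl1 : l = 1 := tendsto_nhds_unique h1 tendsto_const_nhds
    have hl0 : l = 0 := tendsto_nhds_unique h0 tendsto_const_nhds
    rw [hl1] at hl0
    exact one_ne_zero hl0
end
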